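/- Let q : V → ℝ be a quadratic form on a finite-dimensional real vector space V, represented as q(u) = ⟨Au, u⟩ with A self-adjoint, and suppose q ≤ 0 on a subspace T of V. Then for every δ < 0 and every self-adjoint positive definite operator E on V, the form q_δ(u) = q(u) + δ⟨Eu, u⟩ is strictly negative on T \ {0}. Moreover, if Q is a positive semidefinite self-adjoint operator on V whose kernel equals T, then there exists λ₀ < 0 such that for all λ ≤ λ₀, q(u) + δ⟨Eu,u⟩ + λ⟨Qu,u⟩ < 0 for all nonzero u ∈ V. -/

import Mathlib

lemma psd_inner_zero {V : Type} [NormedAddCommGroup V] [InnerProductSpace ℝ V]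
    (Q : V →ₗ[ℝ] V) (hQ : Q.IsSymmetric)
    (hQpsd : ∀ u : V, 0 ≤ (inner ℝ (Q u) u : ℝ))
    (u : V) (h : (inner ℝ (Q u) u : ℝ) = 0) : Q u = 0 := by
  have hall : ∀ v : V, (inner ℝ (Q u) v : ℝ) = 0 := by
    intro v
    set a : ℝ := inner ℝ (Q u) v with ha
    set c : ℝ := inner ℝ (Q v) v with hc
    have hc0 : 0 ≤ c := hQpsd v
    have key : ∀ r : ℝ, 0 ≤ r ^ 2 * c + 2 * r * a := by
      intro r
      have h1 := hQpsd (u + r • v)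
      have hsym : (inner ℝ (Q v) u : ℝ) = inner ℝ (Q u) v := by
        rw [hQ v u, real_inner_comm]
      have hexp : (inner ℝ (Q (u + r • v)) (u + r • v) : ℝ) =
          inner ℝ (Q u) u + r * inner ℝ (Q u) v + r * inner ℝ (Q v) u
            + r ^ 2 * inner ℝ (Q v) v := by
        simp [map_add, map_smul, inner_add_left, inner_add_right,
          real_inner_smul_left, real_inner_smul_right]
        ring
      rw [hexp, h, hsym] at h1
      nlinarith [h1]
    by_contra hne
    have h2 := key (-a / (c + 1))
    have hcp : (0:ℝ) < c + 1 := by linarith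
    have ha2 : 0 < a ^ 2 := by positivity
    have h3 := mul_nonneg h2 (sq_nonneg (c+1))
    have h4 : ((-a / (c + 1)) ^ 2 * c + 2 * (-a / (c + 1)) * a) * (c+1)^2
        = -(a^2*c) - 2*a^2 := by
      field_simp
      ring
    rw [h4] at h3
    nlinarith
  have := hall (Q u)
  rwa [real_inner_self_eq_norm_sq, pow_eq_zero_iff, norm_eq_zero] at this
  norm_num

theorem stmt18 (V : Type) [NormedAddCommGroup V] [InnerProductSpace ℝ V]
    [FiniteDimensional ℝ V]
    (A E Q : V →ₗ[ℝ] V)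
    (hA : A.IsSymmetric) (hE : E.IsSymmetric) (hQ : Q.IsSymmetric)
    (T : Submodule ℝ V)
    (hT : ∀ u ∈ T, (inner ℝ (A u) u : ℝ) ≤ 0)
    (hEpos : ∀ u : V, u ≠ 0 → 0 < (inner ℝ (E u) u : ℝ))
    (hQpsd : ∀ u : V, 0 ≤ (inner ℝ (Q u) u : ℝ))
    (hker : LinearMap.ker Q = T) :
    (∀ δ : ℝ, δ < 0 → ∀ u ∈ T, u ≠ 0 →
      (inner ℝ (A u) u : ℝ) + δ * (inner ℝ (E u) u : ℝ) < 0) ∧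
    (∀ δ : ℝ, δ < 0 → ∃ lam₀ < (0 : ℝ), ∀ lam ≤ lam₀, ∀ u : V, u ≠ 0 →
      (inner ℝ (A u) u : ℝ) + δ * (inner ℝ (E u) u : ℝ) + lam * (inner ℝ (Q u) u : ℝ) < 0) := by
  have part1 : ∀ δ : ℝ, δ < 0 → ∀ u ∈ T, u ≠ 0 →
      (inner ℝ (A u) u : ℝ) + δ * (inner ℝ (E u) u : ℝ) < 0 := by
    intro δ hδ u hu hu0
    have h1 := hT u hu
    have h2 := hEpos u hu0
    nlinarith
  refine ⟨part1, ?_⟩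
  intro δ hδ
  have hAc : Continuous fun u : V => (inner ℝ (A u) u : ℝ) :=
    (A.continuous_of_finiteDimensional).inner continuous_id
  have hEc : Continuous fun u : V => (inner ℝ (E u) u : ℝ) :=
    (E.continuous_of_finiteDimensional).inner continuous_id
  have hQc : Continuous fun u : V => (inner ℝ (Q u) u : ℝ) :=
    (Q.continuous_of_finiteDimensional).inner continuous_id
  have hfc : Continuous fun u : V => (inner ℝ (A u) u : ℝ) + δ * inner ℝ (E u) u :=
    hAc.add (continuous_const.mul hEc)
  -- key claim: on the unit sphere
  have key : ∃ lam₀ < (0:ℝ), ∀ w : V, ‖w‖ = 1 →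
      (inner ℝ (A w) w : ℝ) + δ * inner ℝ (E w) w + lam₀ * inner ℝ (Q w) w < 0 := by
    by_cases hK : ∃ w : V, ‖w‖ = 1 ∧ 0 ≤ (inner ℝ (A w) w : ℝ) + δ * inner ℝ (E w) w
    · obtain ⟨w₀, hw₀, hfw₀⟩ := hK
      set K : Set V := Metric.sphere (0:V) 1 ∩
        {u : V | 0 ≤ (inner ℝ (A u) u : ℝ) + δ * inner ℝ (E u) u} with hKdef
      have hKc : IsCompact K :=
        (isCompact_sphere (0:V) 1).inter_right (isClosed_le continuous_const hfc)
      have hKne : K.Nonempty :=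
        ⟨w₀, ⟨by simpa [mem_sphere_zero_iff_norm] using hw₀, hfw₀⟩⟩
      obtain ⟨u₁, hu₁K, hmin⟩ := hKc.exists_isMinOn hKne hQc.continuousOn
      obtain ⟨u₂, hu₂s, hmax⟩ := (isCompact_sphere (0:V) 1).exists_isMaxOn
        ⟨w₀, by simpa [mem_sphere_zero_iff_norm] using hw₀⟩ hfc.continuousOn
      set m : ℝ := inner ℝ (Q u₁) u₁ with hm
      set M : ℝ := (inner ℝ (A u₂) u₂ : ℝ) + δ * inner ℝ (E u₂) u₂ with hM
      have hu₁n : ‖u₁‖ = 1 := by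
        have := hu₁K.1; rwa [mem_sphere_zero_iff_norm] at this
      have hu₁0 : u₁ ≠ 0 := by
        intro h; rw [h, norm_zero] at hu₁n; norm_num at hu₁n
      have hmpos : 0 < m := by
        rcases lt_or_eq_of_le (hQpsd u₁) with h | h
        · exact h
        · exfalso
          have hQu₁ : Q u₁ = 0 := psd_inner_zero Q hQ hQpsd u₁ h.symm
          have hu₁T : u₁ ∈ T := by
            rw [← hker]; exact hQu₁
          have := part1 δ hδ u₁ hu₁T hu₁0
          have := hu₁K.2
          simp only [Set.mem_setOf_eq] at this
          linarith
      have hM0 : 0 ≤ M := le_trans hfw₀ (hmax (by simpa [mem_sphere_zero_iff_norm] using hw₀))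
      have hlamneg : -(M + 1) / m < 0 := div_neg_of_neg_of_pos (by linarith) hmpos
      have hlamm : -(M + 1) / m * m = -(M + 1) := by
        field_simp
      refine ⟨-(M + 1) / m, hlamneg, ?_⟩
      intro w hw
      have hws : w ∈ Metric.sphere (0:V) 1 := by
        simpa [mem_sphere_zero_iff_norm] using hw
      have hgw : 0 ≤ (inner ℝ (Q w) w : ℝ) := hQpsd w
      by_cases hfw : (inner ℝ (A w) w : ℝ) + δ * inner ℝ (E w) w < 0
      · have : -(M + 1) / m * inner ℝ (Q w) w ≤ 0 :=
          mul_nonpos_of_nonpos_of_nonneg (le_of_lt hlamneg) hgw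
        linarith
      · push_neg at hfw
        have hwK : w ∈ K := ⟨hws, hfw⟩
        have hgm : m ≤ (inner ℝ (Q w) w : ℝ) := hmin hwK
        have hfM : (inner ℝ (A w) w : ℝ) + δ * inner ℝ (E w) w ≤ M := hmax hws
        have h1 : -(M + 1) / m * inner ℝ (Q w) w ≤ -(M + 1) / m * m :=
          mul_le_mul_of_nonpos_left hgm (le_of_lt hlamneg)
        rw [hlamm] at h1
        linarith
    · push_neg at hK
      refine ⟨-1, by norm_num, ?_⟩
      intro w hw
      have h1 := hK w hw
      have h2 := hQpsd w
      nlinarith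
  obtain ⟨lam₀, hlam₀, hkey⟩ := key
  refine ⟨lam₀, hlam₀, ?_⟩
  intro lam hlam u hu0
  set c : ℝ := ‖u‖ with hc
  have hcpos : 0 < c := norm_pos_iff.mpr hu0
  set w : V := c⁻¹ • u with hwdef
  have hwn : ‖w‖ = 1 := by
    rw [hwdef, norm_smul, norm_inv, Real.norm_eq_abs, abs_of_pos hcpos, ← hc,
      inv_mul_cancel₀ (ne_of_gt hcpos)]
  have huw : u = c • w := by
    rw [hwdef, smul_smul, mul_inv_cancel₀ (ne_of_gt hcpos), one_smul]
  have hw0 : w ≠ 0 := by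
    intro h; rw [h, norm_zero] at hwn; norm_num at hwn
  have hkw := hkey w hwn
  have hgw : 0 ≤ (inner ℝ (Q w) w : ℝ) := hQpsd w
  have hstep : (inner ℝ (A w) w : ℝ) + δ * inner ℝ (E w) w + lam * inner ℝ (Q w) w < 0 := by
    have : lam * (inner ℝ (Q w) w : ℝ) ≤ lam₀ * inner ℝ (Q w) w :=
      mul_le_mul_of_nonneg_right hlam hgw
    linarith
  have hscale : (inner ℝ (A u) u : ℝ) + δ * (inner ℝ (E u) u : ℝ) + lam * (inner ℝ (Q u) u : ℝ)
      = c ^ 2 * ((inner ℝ (A w) w : ℝ) + δ * inner ℝ (E w) w + lam * inner ℝ (Q w) w) := by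
    rw [huw]
    simp [map_smul, real_inner_smul_left, real_inner_smul_right]
    ring
  rw [hscale]
  exact mul_neg_of_pos_of_neg (by positivity) hstep
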